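/- Let C > 0 and let J : (−∞, 0) → ℝ be a differentiable function with J(t) ≥ 0 for all t < 0 and J′(t) ≤ −C · (−t)^{1/2} · J(t)⁵ for all t < 0. Then J(t) = 0 for all t < 0. -/

import Mathlib

/-- The ODE rigidity step in the proof of Theorem 1.3 of the paper: a
nonnegative differentiable function `J` on `(−∞, 0)` satisfying
`J′(t) ≤ −C (−t)^{1/2} J(t)⁵` must vanish identically. -/
theorem stmt_6 (C : ℝ) (hC : 0 < C) (J : ℝ → ℝ)
    (hdiff : ∀ t < (0 : ℝ), DifferentiableAt ℝ J t)
    (hnonneg : ∀ t < (0 : ℝ), 0 ≤ J t)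
    (hode : ∀ t < (0 : ℝ), deriv J t ≤ -C * Real.sqrt (-t) * (J t) ^ 5) :
    ∀ t < (0 : ℝ), J t = 0 := by
  intro t₀ ht₀
  by_contra hne
  have hpos : 0 < J t₀ := lt_of_le_of_ne (hnonneg t₀ ht₀) (Ne.symm hne)
  set c := C * Real.sqrt (-t₀) with hc
  have hcpos : 0 < c := mul_pos hC (Real.sqrt_pos.2 (by linarith))
  -- J is antitone to the left of t₀, hence J ≥ J t₀ there
  have hanti : ∀ s ≤ t₀, J t₀ ≤ J s := by
    intro s hs
    rcases eq_or_lt_of_le hs with rfl | hs'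
    · exact le_refl _
    · have hlt : ∀ x ∈ Set.Icc s t₀, x < 0 := fun x hx => lt_of_le_of_lt hx.2 ht₀
      have hA : AntitoneOn J (Set.Icc s t₀) := by
        apply antitoneOn_of_deriv_nonpos (convex_Icc s t₀)
        · exact fun x hx => ((hdiff x (hlt x hx)).continuousAt).continuousWithinAt
        · intro x hx
          rw [interior_Icc] at hx
          exact (hdiff x (hlt x (Set.Ioo_subset_Icc_self hx))).differentiableWithinAt
        · intro x hx
          rw [interior_Icc] at hx
          have hx0 : x < 0 := hlt x (Set.Ioo_subset_Icc_self hx)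
          have := hode x hx0
          have h1 : -C * Real.sqrt (-x) * J x ^ 5 ≤ 0 := by
            have : (0:ℝ) ≤ C * Real.sqrt (-x) * J x ^ 5 :=
              mul_nonneg (mul_nonneg hC.le (Real.sqrt_nonneg _))
                (pow_nonneg (hnonneg x hx0) 5)
            nlinarith
          linarith
      exact hA (Set.left_mem_Icc.2 hs) (Set.right_mem_Icc.2 hs) hs
  -- consider g = (J^4)⁻¹
  set g : ℝ → ℝ := fun t => (J t ^ 4)⁻¹ with hg
  -- on (-∞, t₀], deriv g ≥ 4c
  have key : ∀ s ≤ t₀, 4 * c * (t₀ - s) ≤ g t₀ - g s := by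
    intro s hs
    have hlt : ∀ x ∈ Set.Icc s t₀, x < 0 := fun x hx => lt_of_le_of_lt hx.2 ht₀
    have hJpos : ∀ x ∈ Set.Icc s t₀, 0 < J x := fun x hx =>
      lt_of_lt_of_le hpos (hanti x hx.2)
    have hdg : ∀ x ∈ Set.Icc s t₀, DifferentiableAt ℝ g x := by
      intro x hx
      exact (((hdiff x (hlt x hx)).pow 4).inv (pow_pos (hJpos x hx) 4).ne')
    apply Convex.mul_sub_le_image_sub_of_le_deriv (convex_Icc s t₀)
    · exact fun x hx => (hdg x hx).continuousAt.continuousWithinAt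
    · intro x hx
      rw [interior_Icc] at hx
      exact (hdg x (Set.Ioo_subset_Icc_self hx)).differentiableWithinAt
    · intro x hx
      rw [interior_Icc] at hx
      have hxm := Set.Ioo_subset_Icc_self hx
      have hx0 : x < 0 := hlt x hxm
      have hJx : 0 < J x := hJpos x hxm
      have hdJ := hdiff x hx0
      have hcalc : deriv g x = -((4:ℝ) * J x ^ 3 * deriv J x) / (J x ^ 4) ^ 2 := by
        rw [hg]
        rw [deriv_fun_inv'' (hdJ.fun_pow 4) (pow_pos hJx 4).ne', deriv_fun_pow hdJ 4]
        norm_num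
      rw [hcalc]
      -- deriv J x ≤ -c * J x ^ 5
      have hodex : deriv J x ≤ -c * J x ^ 5 := by
        have h1 := hode x hx0
        have hsq : Real.sqrt (-t₀) ≤ Real.sqrt (-x) := by
          apply Real.sqrt_le_sqrt; linarith [hxm.2]
        have h2 : -C * Real.sqrt (-x) * J x ^ 5 ≤ -C * Real.sqrt (-t₀) * J x ^ 5 := by
          have : C * Real.sqrt (-t₀) * J x ^ 5 ≤ C * Real.sqrt (-x) * J x ^ 5 := by
            apply mul_le_mul_of_nonneg_right _ (pow_nonneg hJx.le 5)
            exact mul_le_mul_of_nonneg_left hsq hC.le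
          linarith
        calc deriv J x ≤ -C * Real.sqrt (-x) * J x ^ 5 := h1
          _ ≤ -C * Real.sqrt (-t₀) * J x ^ 5 := h2
          _ = -c * J x ^ 5 := by rw [hc]; ring
      rw [le_div_iff₀ (by positivity)]
      nlinarith [pow_pos hJx 3, pow_pos hJx 5, pow_pos hJx 8]
    · exact Set.left_mem_Icc.2 hs
    · exact Set.right_mem_Icc.2 hs
    · exact hs
  -- derive contradiction by taking s far to the left
  have hgt : 0 < g t₀ := by simp only [hg]; positivity
  have hd : 0 < (g t₀ + 1) / (4 * c) := div_pos (by linarith) (by linarith)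
  have h := key (t₀ - (g t₀ + 1) / (4 * c)) (by linarith)
  have hgs : 0 ≤ g (t₀ - (g t₀ + 1) / (4 * c)) := by
    simp only [hg]
    positivity
  have h2 : 4 * c * (t₀ - (t₀ - (g t₀ + 1) / (4 * c))) = g t₀ + 1 := by
    field_simp
    ring
  rw [h2] at h
  linarith
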